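/- If h and h' are partial orders on the same finite set V and the relation ≻_h is strictly contained in the relation ≻_{h'} (i.e., ≻_h ⊆ ≻_{h'} and ≻_h ≠ ≻_{h'}), then |L[h']| < |L[h]|: adding order relations strictly decreases the number of linear extensions. -/

import Mathlib

/-- A (strict) partial order on `V`: an irreflexive transitive binary relation. -/
def IsPartialOrderOn {V : Type*} (r : V → V → Prop) : Prop :=
  (∀ a, ¬ r a a) ∧ (∀ a b c, r a b → r b c → r a c)

/-- `l` is a linear extension of the partial order `r`: it enumerates `V` without
repetition and for `a < b` it is not the case that `l_b ≻ l_a`. -/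
def IsLinext {V : Type*} (r : V → V → Prop) (l : List V) : Prop :=
  l.Nodup ∧ (∀ v : V, v ∈ l) ∧
    ∀ a b : Fin l.length, a < b → ¬ r (l.get b) (l.get a)

/- **Statement 3.** Adding order relations strictly decreases the number of linear
extensions: if `≻_h ⊊ ≻_{h'}` then `|L[h']| < |L[h]|`. -/
theorem ncard_linexts_lt_of_ssubset {V : Type*} [Fintype V]
    (r r' : V → V → Prop) (hr : IsPartialOrderOn r) (hr' : IsPartialOrderOn r')
    (hsub : ∀ i j : V, r i j → r' i j) (hne : r ≠ r') :
    {l : List V | IsLinext r' l}.ncard < {l : List V | IsLinext r l}.ncard := by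
  classical
  -- find a pair in r' \ r
  have hex : ∃ x y, r' x y ∧ ¬ r x y := by
    by_contra hcon
    push_neg at hcon
    exact hne (funext fun a => funext fun b => propext ⟨hsub a b, hcon a b⟩)
  obtain ⟨x, y, hr'xy, hnrxy⟩ := hex
  have hxy : x ≠ y := fun h => hr'.1 x (h ▸ hr'xy)
  have hnryx : ¬ r y x := fun h => hr'.1 x (hr'.2 x y x hr'xy (hsub _ _ h))
  -- reflexive closure S of r
  let S : V → V → Prop := fun a b => a = b ∨ r a b
  have Strans : ∀ a b c, S a b → S b c → S a c := by
    rintro a b c (rfl | hab) (rfl | hbc)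
    · exact Or.inl rfl
    · exact Or.inr hbc
    · exact Or.inr hab
    · exact Or.inr (hr.2 _ _ _ hab hbc)
  have hnSxy : ¬ S x y := by rintro (rfl | h) <;> [exact hxy rfl; exact hnrxy h]
  have Santi : ∀ a b, S a b → S b a → a = b := by
    rintro a b (rfl | hab) hba
    · rfl
    · rcases hba with rfl | hba
      · rfl
      · exact absurd (hr.2 _ _ _ hab hba) (hr.1 a)
  -- extend with (y, x)
  let p : V → V → Prop := fun a b => S a b ∨ (S a y ∧ S x b)
  haveI : IsPartialOrder V p :=
    { refl := fun a => Or.inl (Or.inl rfl)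
      trans := by
        rintro a b c (hab | ⟨hay, hxb⟩) (hbc | ⟨hby, hxc⟩)
        · exact Or.inl (Strans _ _ _ hab hbc)
        · exact Or.inr ⟨Strans _ _ _ hab hby, hxc⟩
        · exact Or.inr ⟨hay, Strans _ _ _ hxb hbc⟩
        · exact absurd (Strans _ _ _ hxb hby) hnSxy
      antisymm := by
        rintro a b (hab | ⟨hay, hxb⟩) (hba | ⟨hby, hxa⟩)
        · exact Santi _ _ hab hba
        · exact absurd (Strans _ _ _ (Strans _ _ _ hxa hab) hby) hnSxy
        · exact absurd (Strans _ _ _ (Strans _ _ _ hxb hba) hay) hnSxy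
        · exact absurd (Strans _ _ _ hxb hby) hnSxy }
  obtain ⟨t, ht, hpt⟩ := extend_partialOrder p
  haveI : IsLinearOrder V t := ht
  haveI : DecidableRel t := Classical.decRel t
  set l : List V := Finset.univ.sort t with hl
  have hnodup : l.Nodup := Finset.sort_nodup _ t
  have hmem : ∀ v : V, v ∈ l := fun v => (Finset.mem_sort (r := t)).2 (Finset.mem_univ v)
  have hsorted : l.Pairwise t := Finset.pairwise_sort _ t
  have hget_ne : ∀ a b : Fin l.length, a < b → l.get a ≠ l.get b := by
    intro a b hab h
    exact absurd (List.nodup_iff_injective_get.1 hnodup h) (ne_of_lt hab)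
  have hlinr : IsLinext r l := by
    refine ⟨hnodup, hmem, fun a b hab hrel => ?_⟩
    have h1 : t (l.get a) (l.get b) := hsorted.rel_get_of_lt hab
    have h2 : t (l.get b) (l.get a) := hpt _ _ (Or.inl (Or.inr hrel))
    exact hget_ne a b hab (antisymm_of t h1 h2)
  -- y comes before x in l
  obtain ⟨i, hi⟩ := List.mem_iff_get.1 (hmem y)
  obtain ⟨j, hj⟩ := List.mem_iff_get.1 (hmem x)
  have htyx : t y x := hpt _ _ (Or.inr ⟨Or.inl rfl, Or.inl rfl⟩)
  have hij : i < j := by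
    rcases lt_trichotomy i j with h | h | h
    · exact h
    · exact absurd (by rw [← hi, ← hj, h]) hxy.symm
    · have h1 : t (l.get j) (l.get i) := hsorted.rel_get_of_lt h
      rw [hi, hj] at h1
      exact absurd (antisymm_of t h1 htyx) hxy
  have hnotlin : ¬ IsLinext r' l := by
    intro hlin
    exact hlin.2.2 i j hij (by rw [hi, hj]; exact hr'xy)
  -- conclude
  have hfin : {l : List V | IsLinext r l}.Finite := by
    apply (List.finite_length_eq V (Fintype.card V)).subset
    intro m hm
    have : m.Nodup := hm.1
    have hlen : m.length = Fintype.card V := by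
      have := List.toFinset_card_of_nodup hm.1
      rw [← this]
      congr 1
      apply Finset.eq_univ_iff_forall.2
      intro v
      simpa using hm.2.1 v
    exact hlen
  apply Set.ncard_lt_ncard _ hfin
  constructor
  · intro m hm
    exact ⟨hm.1, hm.2.1, fun a b hab hrel => hm.2.2 a b hab (hsub _ _ hrel)⟩
  · intro hsub2
    exact hnotlin (hsub2 hlinr)
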